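/- Let (d_i)_{i≥1} be an infinite alternate Lyndon word with Lyndon system M, language L_M, and H_n the number of words of length n in L_M. Let A(n) = a_1a_2⋯a_n and B(n) = b_1b_2⋯b_n be two words of L_M with A(n) ≺ B(n), and let Γ_{A,B}(n) be the number of words X(n) = x_1⋯x_n ∈ L_M with A(n) ⪯ X(n) ⪯ B(n). Then Γ_{A,B}(n) = Σ_{i=1}^{n} (−1)^i (b_i − a_i) H_{n−i} + 1. -/

import Mathlib

open Filter Topology

/-- Alternate (Ito–Sadahiro) strict order on infinite sequences (0-indexed: entry `i`
is the `(i+1)`-th letter `x_{i+1}` of the paper). `altLt x y` iff at the first index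
where they differ the comparison alternates with the parity of the index:
`(-1)^k (x_k - y_k) < 0` in 1-based indexing. -/
def altLt (x y : ℕ → ℕ) : Prop :=
  ∃ k : ℕ, (∀ i < k, x i = y i) ∧ (if Even k then y k < x k else x k < y k)

def altLe (x y : ℕ → ℕ) : Prop := x = y ∨ altLt x y

def shiftSeq (x : ℕ → ℕ) (k : ℕ) : ℕ → ℕ := fun i => x (k + i)

/-- An alternate Lyndon word: smaller (in the alternate order) than all of its shifts. -/
def IsAltLyndon (d : ℕ → ℕ) : Prop := ∀ k : ℕ, altLe d (shiftSeq d k)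

/-- The Lyndon system associated to `d`: sequences over the alphabet `{0, …, d_1}`
all of whose shifts dominate `d` in the alternate order. -/
def LyndonSystem (d : ℕ → ℕ) : Set (ℕ → ℕ) :=
  {x | (∀ i, x i ≤ d 0) ∧ ∀ k : ℕ, altLe d (shiftSeq x k)}

def IsFactorOf (w : List ℕ) (x : ℕ → ℕ) : Prop :=
  ∃ k : ℕ, w = (List.range w.length).map (fun i => x (k + i))

/-- The language of the Lyndon system: finite factors of its elements. -/
def LyndonLang (d : ℕ → ℕ) : Set (List ℕ) :=
  {w | ∃ x ∈ LyndonSystem d, IsFactorOf w x}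

/-- `Hword d n` is the number of words of length `n` in the language `L_M`. -/
noncomputable def Hword (d : ℕ → ℕ) (n : ℕ) : ℕ :=
  Set.ncard {w : List ℕ | w ∈ LyndonLang d ∧ w.length = n}

/-- The topological entropy of the Lyndon system of `d` equals `h`,
i.e. `lim_{n→∞} (log H_n)/n = h`. -/
def EntropyIs (d : ℕ → ℕ) (h : ℝ) : Prop :=
  Filter.Tendsto (fun n : ℕ => Real.log (Hword d n) / n) Filter.atTop (nhds h)

/-- A finite word viewed as an infinite sequence, padded by zeros on the right. -/
def padSeq (w : List ℕ) : ℕ → ℕ := fun i => w.getD i 0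
/-- The alternate order on finite words (padding with zeros). -/
def altLtList (v w : List ℕ) : Prop := altLt (padSeq v) (padSeq w)
def altLeList (v w : List ℕ) : Prop := altLe (padSeq v) (padSeq w)

section Infra

/-- parity-conditional comparison -/
def cnd (k : ℕ) (u v : ℕ) : Prop := if Even k then v < u else u < v

lemma cnd_ne {k u v} (h : cnd k u v) : u ≠ v := by
  unfold cnd at h; split at h <;> omega

lemma cnd_asymm {k u v} (h : cnd k u v) (h' : cnd k v u) : False := by
  by_cases he : Even k <;> simp only [cnd, he, if_true, if_false, if_pos, if_neg, not_false_iff] at h h' <;> omega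

lemma cnd_trans {k u v w} (h : cnd k u v) (h' : cnd k v w) : cnd k u w := by
  by_cases he : Even k <;> simp only [cnd, he, if_true, if_false, if_pos, if_neg, not_false_iff] at * <;> omega

lemma cnd_congr {k j u v} (hp : Even k ↔ Even j) : cnd k u v ↔ cnd j u v := by
  unfold cnd; by_cases h : Even k
  · rw [if_pos h, if_pos (hp.mp h)]
  · rw [if_neg h, if_neg (fun hj => h (hp.mpr hj))]

lemma cnd_flip {k j u v} (hp : Even k ↔ ¬ Even j) : cnd k u v ↔ cnd j v u := by
  unfold cnd; by_cases h : Even k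
  · rw [if_pos h, if_neg (hp.mp h)]
  · rw [if_neg h, if_pos (not_not.mp (fun hj => h (hp.mpr hj)))]

lemma altLt_def' (x y : ℕ → ℕ) :
    altLt x y ↔ ∃ k : ℕ, (∀ i < k, x i = y i) ∧ cnd k (x k) (y k) := Iff.rfl

lemma altLt_witness {x y : ℕ → ℕ} (h : altLt x y) {j : ℕ}
    (hj : x j ≠ y j) (hbef : ∀ i < j, x i = y i) : cnd j (x j) (y j) := by
  obtain ⟨k, hk, hc⟩ := h
  rcases lt_trichotomy k j with hlt | rfl | hgt
  · exact absurd (hbef k hlt) (cnd_ne hc)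
  · exact hc
  · exact absurd (hk j hgt) hj

lemma altLt_irrefl (x : ℕ → ℕ) : ¬ altLt x x := by
  rintro ⟨k, -, hc⟩; exact cnd_ne hc rfl

lemma altLt_asymm {x y : ℕ → ℕ} (h : altLt x y) (h' : altLt y x) : False := by
  obtain ⟨k, hk, hc⟩ := h
  have : ∀ i < k, y i = x i := fun i hi => (hk i hi).symm
  exact cnd_asymm hc (altLt_witness h' (fun e => cnd_ne hc e.symm) this)

lemma altLt_trans {x y z : ℕ → ℕ} (h : altLt x y) (h' : altLt y z) : altLt x z := by
  obtain ⟨k, hk, hc⟩ := h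
  obtain ⟨k', hk', hc'⟩ := h'
  rcases lt_trichotomy k k' with hlt | rfl | hgt
  · exact ⟨k, fun i hi => (hk i hi).trans (hk' i (hi.trans hlt)), (hk' k hlt) ▸ hc⟩
  · exact ⟨k, fun i hi => (hk i hi).trans (hk' i hi), cnd_trans hc hc'⟩
  · exact ⟨k', fun i hi => (hk i (hi.trans hgt)).trans (hk' i hi), (hk k' hgt).symm ▸ hc'⟩

lemma alt_total (x y : ℕ → ℕ) : (∀ i, x i = y i) ∨ altLt x y ∨ altLt y x := by
  by_cases h : ∀ i, x i = y i
  · exact Or.inl h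
  · push_neg at h
    classical
    have hex : ∃ k, x k ≠ y k := h
    let k := Nat.find hex
    have hk : x k ≠ y k := Nat.find_spec hex
    have hbef : ∀ i < k, x i = y i := fun i hi => not_not.mp (Nat.find_min hex hi)
    rcases lt_or_gt_of_ne hk with hlt | hgt
    · by_cases he : Even k
      · exact Or.inr (Or.inr ⟨k, fun i hi => (hbef i hi).symm, by simp [he, hlt]⟩)
      · exact Or.inr (Or.inl ⟨k, hbef, by simp [he, hlt]⟩)
    · by_cases he : Even k
      · exact Or.inr (Or.inl ⟨k, hbef, by simp [cnd, he, hgt]⟩)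
      · exact Or.inr (Or.inr ⟨k, fun i hi => (hbef i hi).symm, by simp [cnd, he, hgt]⟩)

lemma altLe_trans {x y z : ℕ → ℕ} (h : altLe x y) (h' : altLe y z) : altLe x z := by
  rcases h with rfl | h
  · exact h'
  rcases h' with rfl | h'
  · exact Or.inr h
  · exact Or.inr (altLt_trans h h')

lemma altLe_antisymm {x y : ℕ → ℕ} (h : altLe x y) (h' : altLe y x) : x = y := by
  rcases h with rfl | h
  · rfl
  rcases h' with rfl | h'
  · rfl
  · exact absurd h (fun hh => altLt_asymm hh h')

/-- dropping a common prefix: parity-preserving case -/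
lemma altLt_shift {x y : ℕ → ℕ} {t : ℕ} (hagree : ∀ i < t, x i = y i) :
    altLt x y ↔ (if Even t then altLt (shiftSeq x t) (shiftSeq y t)
                 else altLt (shiftSeq y t) (shiftSeq x t)) := by
  constructor
  · rintro ⟨k, hk, hc⟩
    have hkt : t ≤ k := by
      by_contra hh
      exact cnd_ne hc (hagree k (by omega))
    obtain ⟨j, rfl⟩ : ∃ j, k = t + j := ⟨k - t, by omega⟩
    by_cases he : Even t
    · rw [if_pos he]
      refine ⟨j, fun i hi => hk (t+i) (by omega), ?_⟩
      exact (cnd_congr (j := j) (by simp [Nat.even_add, he])).mp hc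
    · rw [if_neg he]
      refine ⟨j, fun i hi => (hk (t+i) (by omega)).symm, ?_⟩
      exact (cnd_flip (j := j) (by simp [Nat.even_add, he])).mp hc
  · intro h
    by_cases he : Even t
    · rw [if_pos he] at h
      obtain ⟨j, hj, hc⟩ := h
      refine ⟨t + j, fun i hi => ?_, (cnd_congr (j := j) (by simp [Nat.even_add, he])).mpr hc⟩
      rcases lt_or_ge i t with hi' | hi'
      · exact hagree i hi'
      · have := hj (i - t) (by omega)
        simpa [shiftSeq, Nat.add_sub_cancel' hi'] using this
    · rw [if_neg he] at h
      obtain ⟨j, hj, hc⟩ := h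
      refine ⟨t + j, fun i hi => ?_, (cnd_flip (j := j) (by simp [Nat.even_add, he])).mpr hc⟩
      rcases lt_or_ge i t with hi' | hi'
      · exact hagree i hi'
      · have := hj (i - t) (by omega)
        simpa [shiftSeq, Nat.add_sub_cancel' hi'] using (this).symm

lemma padSeq_drop (w : List ℕ) (t : ℕ) : padSeq (w.drop t) = shiftSeq (padSeq w) t := by
  funext i
  simp [padSeq, shiftSeq, List.getD_eq_getElem?_getD, List.getElem?_drop]

lemma padSeq_append_left {p : List ℕ} (q : List ℕ) {i : ℕ} (h : i < p.length) :
    padSeq (p ++ q) i = padSeq p i := List.getD_append p q 0 i h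

lemma padSeq_append_right {p : List ℕ} (q : List ℕ) {i : ℕ} (h : p.length ≤ i) :
    padSeq (p ++ q) i = padSeq q (i - p.length) := List.getD_append_right p q 0 i h

lemma padSeq_eq_zero {w : List ℕ} {i : ℕ} (h : w.length ≤ i) : padSeq w i = 0 := by
  simp [padSeq, List.getD_eq_getElem?_getD, List.getElem?_eq_none h]

lemma list_eq_of_padSeq {v w : List ℕ} (hl : v.length = w.length)
    (h : ∀ i, padSeq v i = padSeq w i) : v = w := by
  apply List.ext_getElem hl
  intro i h1 h2
  have := h i
  simpa [padSeq, List.getD_eq_getElem?_getD, List.getElem?_eq_getElem, h1, h2] using this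

end Infra
section GoodLang

variable (d : ℕ → ℕ)

/-- `t` matches `d` at offset `m` along its whole length. -/
def isPre (m : ℕ) (t : List ℕ) : Prop := ∀ i < t.length, padSeq t i = d (m + i)

/-- `t` has a strict witness against `d` at offset `m`. -/
def hasWit (m : ℕ) (t : List ℕ) : Prop :=
  ∃ k < t.length, (∀ i < k, padSeq t i = d (m + i)) ∧ cnd (m + k) (d (m + k)) (padSeq t k)

def okOff (m : ℕ) (t : List ℕ) : Prop := isPre d m t ∨ hasWit d m t

/-- all suffixes are admissible -/
def good (w : List ℕ) : Prop := ∀ j : ℕ, okOff d 0 (w.drop j)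

variable {d}

lemma good_drop {w : List ℕ} (h : good d w) (t : ℕ) : good d (w.drop t) := by
  intro j; rw [List.drop_drop]; exact h (t + j)

lemma okOff_append {m : ℕ} {t r : List ℕ} :
    okOff d m (t ++ r) ↔ hasWit d m t ∨ (isPre d m t ∧ okOff d (m + t.length) r) := by
  have hlen : (t ++ r).length = t.length + r.length := by simp
  have hL : ∀ i (_ : i < t.length), padSeq (t ++ r) i = padSeq t i :=
    fun i hi => padSeq_append_left _ hi
  have hR : ∀ i, padSeq (t ++ r) (t.length + i) = padSeq r i := fun i => by
    rw [padSeq_append_right _ (by omega), Nat.add_sub_cancel_left]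
  constructor
  · rintro (hp | hw)
    · refine Or.inr ⟨fun i hi => by rw [← hL i hi]; exact hp i (by omega), Or.inl ?_⟩
      intro i hi
      rw [← hR i, Nat.add_assoc]
      exact hp (t.length + i) (by omega)
    · obtain ⟨k, hk, hbef, hc⟩ := hw
      rcases lt_or_ge k t.length with hkt | hkt
      · exact Or.inl ⟨k, hkt, fun i hi => by rw [← hL i (by omega)]; exact hbef i hi,
          by rwa [hL k hkt] at hc⟩
      · refine Or.inr ⟨fun i hi => by rw [← hL i hi]; exact hbef i (by omega), Or.inr
          ⟨k - t.length, by omega, fun i hi => ?_, ?_⟩⟩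
        · rw [← hR i, Nat.add_assoc]; exact hbef (t.length + i) (by omega)
        · have h1 : m + t.length + (k - t.length) = m + k := by omega
          have h2 : padSeq r (k - t.length) = padSeq (t ++ r) k := by
            rw [← hR (k - t.length), Nat.add_sub_cancel' hkt]
          rw [h1, h2]; exact hc
  · rintro (hw | ⟨hp, hok⟩)
    · obtain ⟨k, hk, hbef, hc⟩ := hw
      exact Or.inr ⟨k, by omega, fun i hi => by rw [hL i (by omega)]; exact hbef i hi,
        by rwa [hL k hk]⟩
    · rcases hok with hp' | hw'
      · refine Or.inl (fun i hi => ?_)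
        rcases lt_or_ge i t.length with hit | hit
        · rw [hL i hit]; exact hp i hit
        · obtain ⟨j, rfl⟩ : ∃ j, i = t.length + j := ⟨i - t.length, by omega⟩
          rw [hR j, ← Nat.add_assoc]
          exact hp' j (by omega)
      · obtain ⟨k, hk, hbef, hc⟩ := hw'
        refine Or.inr ⟨t.length + k, by omega, fun i hi => ?_, ?_⟩
        · rcases lt_or_ge i t.length with hit | hit
          · rw [hL i hit]; exact hp i hit
          · obtain ⟨j, rfl⟩ : ∃ j, i = t.length + j := ⟨i - t.length, by omega⟩
            rw [hR j, ← Nat.add_assoc]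
            exact hbef j (by omega)
        · rw [hR k, ← Nat.add_assoc]; exact hc
lemma okOff_cons {m : ℕ} {c : ℕ} {u : List ℕ} :
    okOff d m (c :: u) ↔ cnd m (d m) c ∨ (c = d m ∧ okOff d (m + 1) u) := by
  have : c :: u = [c] ++ u := rfl
  rw [this, okOff_append]
  have hW : hasWit d m [c] ↔ cnd m (d m) c := by
    constructor
    · rintro ⟨k, hk, -, hc⟩
      simp only [List.length_singleton] at hk
      obtain rfl : k = 0 := by omega
      simpa [padSeq] using hc
    · intro h
      exact ⟨0, by simp, fun i hi => absurd hi (by omega), by simpa [padSeq] using h⟩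
  have hP : isPre d m [c] ↔ c = d m := by
    constructor
    · intro h; simpa [padSeq] using h 0 (by simp)
    · intro h i hi
      simp only [List.length_singleton] at hi
      obtain rfl : i = 0 := by omega
      simpa [padSeq] using h
  simp only [hW, hP, List.length_singleton]

variable (d) in
/-- the factor of `d` of length `ν` starting at offset `m` -/
def Dw (m ν : ℕ) : List ℕ := (List.range ν).map (fun i => d (m + i))

@[simp] lemma Dw_length (m ν : ℕ) : (Dw d m ν).length = ν := by simp [Dw]

lemma Dw_pad {m ν i : ℕ} (h : i < ν) : padSeq (Dw d m ν) i = d (m + i) := by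
  simp [Dw, padSeq, List.getD_eq_getElem?_getD, List.getElem?_range h]

lemma okOff_iff_le {m : ℕ} {u : List ℕ} :
    okOff d m u ↔ (if Even m then altLe (padSeq (Dw d m u.length)) (padSeq u)
      else altLe (padSeq u) (padSeq (Dw d m u.length))) := by
  set ν := u.length with hν
  have hDpad : ∀ i, i < ν → padSeq (Dw d m ν) i = d (m + i) := fun i h => Dw_pad h
  have hD0 : ∀ i, ν ≤ i → padSeq (Dw d m ν) i = 0 := fun i h => padSeq_eq_zero (by simp; omega)
  have hu0 : ∀ i, ν ≤ i → padSeq u i = 0 := fun i h => padSeq_eq_zero (by omega)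
  have heqiff : isPre d m u ↔ padSeq (Dw d m ν) = padSeq u := by
    constructor
    · intro h; funext i
      rcases lt_or_ge i ν with hi | hi
      · rw [hDpad i hi, h i hi]
      · rw [hD0 i hi, hu0 i hi]
    · intro h i hi
      rw [← congrFun h i, hDpad i hi]
  constructor
  · rintro (hp | hw)
    · have := heqiff.mp hp
      split <;> [exact Or.inl this; exact Or.inl this.symm]
    · obtain ⟨k, hk, hbef, hc⟩ := hw
      by_cases he : Even m
      · rw [if_pos he]
        refine Or.inr ⟨k, fun i hi => by rw [hDpad i (by omega), hbef i hi], ?_⟩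
        rw [hDpad k hk]
        exact (cnd_congr (by simp [Nat.even_add, he])).mp hc
      · rw [if_neg he]
        refine Or.inr ⟨k, fun i hi => by rw [hDpad i (by omega), hbef i hi], ?_⟩
        rw [hDpad k hk]
        exact (cnd_flip (by simp [Nat.even_add, he])).mp hc
  · intro h
    by_cases he : Even m
    · rw [if_pos he] at h
      rcases h with heq | hlt
      · exact Or.inl (heqiff.mpr heq)
      · obtain ⟨k, hbef, hc⟩ := hlt
        have hkν : k < ν := by
          by_contra hh
          push_neg at hh
          rw [hD0 k hh, hu0 k hh] at hc
          exact cnd_ne hc rfl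
        refine Or.inr ⟨k, hkν, fun i hi => by rw [← hbef i hi, hDpad i (by omega)], ?_⟩
        rw [← hDpad k hkν]
        exact (cnd_congr (by simp [Nat.even_add, he])).mpr hc
    · rw [if_neg he] at h
      rcases h with heq | hlt
      · exact Or.inl (heqiff.mpr heq.symm)
      · obtain ⟨k, hbef, hc⟩ := hlt
        have hkν : k < ν := by
          by_contra hh
          push_neg at hh
          rw [hD0 k hh, hu0 k hh] at hc
          exact cnd_ne hc rfl
        refine Or.inr ⟨k, hkν, fun i hi => by rw [hbef i hi, hDpad i (by omega)], ?_⟩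
        rw [← hDpad k hkν]
        exact (cnd_flip (by simp [Nat.even_add, he])).mpr hc

/-- words matching a dominated shift are admissible -/
lemma okOff_zero_of_shift {x : ℕ → ℕ} {t : ℕ} (hx : altLe d (shiftSeq x t))
    {s : List ℕ} (hs : ∀ i < s.length, padSeq s i = x (t + i)) : okOff d 0 s := by
  rcases hx with heq | ⟨k, hbef, hc⟩
  · refine Or.inl (fun i hi => ?_)
    rw [hs i hi]
    have := congrFun heq i
    simp only [shiftSeq] at this
    simp [← this]
  · rcases lt_or_ge k s.length with hk | hk
    · refine Or.inr ⟨k, hk, fun i hi => ?_, ?_⟩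
      · rw [hs i (by omega)]
        have := hbef i hi
        simp only [shiftSeq] at this
        simp [← this]
      · rw [hs k hk]
        simp only [Nat.zero_add]
        simpa [cnd, shiftSeq] using hc
    · refine Or.inl (fun i hi => ?_)
      rw [hs i hi]
      have := hbef i (by omega)
      simp only [shiftSeq] at this
      simp [← this]

lemma good_le {w : List ℕ} (h : good d w) (i : ℕ) : padSeq w i ≤ d 0 := by
  rcases lt_or_ge i w.length with hi | hi
  · have := h i
    have hpad : padSeq (w.drop i) 0 = padSeq w i := by
      rw [padSeq_drop]; simp [shiftSeq]
    have hlen : 0 < (w.drop i).length := by simp; omega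
    rcases this with hp | ⟨k, hk, hbef, hc⟩
    · have h0 := hp 0 hlen
      rw [hpad] at h0
      simp only [Nat.add_zero] at h0; omega
    · rcases Nat.eq_zero_or_pos k with rfl | hk0
      · rw [hpad] at hc
        simp only [Nat.add_zero] at hc
        simp [cnd] at hc; omega
      · have h0 := hbef 0 hk0
        rw [hpad] at h0
        simp only [Nat.add_zero] at h0; omega
  · rw [padSeq_eq_zero hi]; omega

lemma lyndon_le (hd : IsAltLyndon d) (m : ℕ) : d m ≤ d 0 := by
  rcases hd m with heq | ⟨k, hbef, hc⟩
  · have h0 := congrFun heq 0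
    simp only [shiftSeq, Nat.add_zero] at h0; omega
  · rcases Nat.eq_zero_or_pos k with rfl | hk0
    · simp only [shiftSeq, Nat.add_zero] at hc
      simp only [cnd, if_pos Even.zero] at hc
      omega
    · have h0 := hbef 0 hk0
      simp only [shiftSeq, Nat.add_zero] at h0; omega

lemma good_Dw (hd : IsAltLyndon d) (m ν : ℕ) : good d (Dw d m ν) := by
  intro j
  apply okOff_zero_of_shift (hd (m + j))
  intro i hi
  have hlen : (List.drop j (Dw d m ν)).length = ν - j := by simp
  have hjν : j + i < ν := by omega
  rw [padSeq_drop]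
  show padSeq (Dw d m ν) (j + i) = d (m + j + i)
  rw [Dw_pad hjν, show m + (j + i) = m + j + i by omega]

lemma good_min {u : List ℕ} (h : good d u) :
    altLe (padSeq (Dw d 0 u.length)) (padSeq u) := by
  have := h 0
  rw [List.drop_zero] at this
  have := okOff_iff_le.mp this
  simpa using this

end GoodLang
section LangEq

variable {d : ℕ → ℕ}

lemma pad_rangeMap {f : ℕ → ℕ} {n t : ℕ} (h : t < n) :
    padSeq ((List.range n).map f) t = f t := by
  simp [padSeq, List.getD_eq_getElem?_getD, List.getElem?_range h]

lemma good_of_mem_lang {w : List ℕ} (h : w ∈ LyndonLang d) : good d w := by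
  obtain ⟨x, hx, k0, hw⟩ := h
  have hwt : ∀ t, t < w.length → padSeq w t = x (k0 + t) := by
    intro t ht
    conv_lhs => rw [show padSeq w t = w.getD t 0 from rfl, hw]
    rw [show ((List.range w.length).map fun i => x (k0 + i)).getD t 0
        = padSeq ((List.range w.length).map fun i => x (k0 + i)) t from rfl, pad_rangeMap ht]
  intro j
  apply okOff_zero_of_shift (hx.2 (k0 + j))
  intro i hi
  have hlen : (w.drop j).length = w.length - j := by simp
  rw [padSeq_drop]
  show padSeq w (j + i) = x (k0 + j + i)
  rw [hwt (j + i) (by omega), show k0 + (j + i) = k0 + j + i by omega]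

open Classical in
/-- the canonical extension letter for a good word -/
noncomputable def extLetter (d : ℕ → ℕ) (w : List ℕ) : ℕ :=
  d (Nat.findGreatest (fun m => m ≤ w.length ∧ isPre d 0 (w.drop (w.length - m))) w.length)

lemma good_extend {w : List ℕ} (hd : IsAltLyndon d) (hw : good d w) :
    good d (w ++ [extLetter d w]) := by
  classical
  set P : ℕ → Prop := fun m => m ≤ w.length ∧ isPre d 0 (w.drop (w.length - m)) with hP
  set M := Nat.findGreatest P w.length with hM
  have hP0 : P 0 := ⟨Nat.zero_le _, fun i hi => by simp at hi⟩
  have hPM : P M := Nat.findGreatest_spec (Nat.zero_le _) hP0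
  have hmax : ∀ m, P m → m ≤ M := fun m hm => Nat.le_findGreatest hm.1 hm
  have hext : extLetter d w = d M := by rw [extLetter]
  -- key: allowedness of d M at every suffix-prefix length m
  have hallow : ∀ m, P m → (d M = d m) ∨ cnd m (d m) (d M) := by
    intro m hm
    rcases eq_or_lt_of_le (hmax m hm) with rfl | hmM
    · exact Or.inl rfl
    -- d (M - m + i) = d i for i < m
    have hper : ∀ i < m, d (M - m + i) = d i := by
      intro i hi
      have h1 := hm.2 i (by simp; omega)
      have h2 := hPM.2 (M - m + i) (by simp; omega)
      rw [padSeq_drop] at h1 h2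
      simp only [shiftSeq, Nat.zero_add] at h1 h2
      rw [show w.length - m + i = w.length - M + (M - m + i) by omega] at h1
      rw [h2] at h1
      omega
    rcases hd (M - m) with heq | ⟨k, hbef, hc⟩
    · have := congrFun heq m
      simp only [shiftSeq] at this
      rw [show M - m + m = M by omega] at this
      exact Or.inl this.symm
    · simp only [shiftSeq] at hbef hc
      rcases lt_trichotomy k m with hkm | rfl | hkm
      · exact absurd (hper k hkm).symm (by
          have : cnd k (d k) (d (M - m + k)) := hc
          exact fun e => cnd_ne this e)
      · right
        rw [show M - k + k = M by omega] at hc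
        exact hc
      · left
        have := hbef m hkm
        rw [show M - m + m = M by omega] at this
        exact this.symm
  rw [hext]
  intro j
  rcases le_or_gt j w.length with hj | hj
  · rw [List.drop_append_of_le_length hj, okOff_append]
    rcases hw j with hp | hwit
    · refine Or.inr ⟨hp, ?_⟩
      have hm : P (w.length - j) := ⟨by omega, by rw [show w.length - (w.length - j) = j by omega]; exact hp⟩
      have hlen : (w.drop j).length = w.length - j := by simp
      rw [hlen, Nat.zero_add, okOff_cons]
      rcases hallow _ hm with he | hcnd
      · exact Or.inr ⟨he.symm ▸ rfl, Or.inl (fun i hi => by simp at hi)⟩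
      · exact Or.inl hcnd
    · exact Or.inl hwit
  · have : (w ++ [d M]).drop j = [] := by
      apply List.drop_eq_nil_of_le
      simp; omega
    rw [this]
    exact Or.inl (fun i hi => by simp at hi)

variable (d) in
noncomputable def tower (w : List ℕ) : ℕ → List ℕ
  | 0 => w
  | t + 1 => tower w t ++ [extLetter d (tower w t)]

lemma tower_good {w : List ℕ} (hd : IsAltLyndon d) (hw : good d w) (t : ℕ) :
    good d (tower d w t) := by
  induction t with
  | zero => exact hw
  | succ t ih => exact good_extend hd ih

@[simp] lemma tower_length (w : List ℕ) (t : ℕ) : (tower d w t).length = w.length + t := by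
  induction t with
  | zero => rfl
  | succ t ih => simp [tower, ih]; omega

lemma tower_agree (w : List ℕ) {t t' : ℕ} (h : t ≤ t') {i : ℕ}
    (hi : i < (tower d w t).length) : padSeq (tower d w t') i = padSeq (tower d w t) i := by
  induction t' with
  | zero => rw [Nat.le_zero.mp h]
  | succ t' ih =>
    rcases eq_or_lt_of_le h with rfl | h'
    · rfl
    · have ht' : t ≤ t' := by omega
      have hb : i < (tower d w t').length := by
        simp only [tower_length] at hi ⊢
        omega
      rw [show tower d w (t'+1) = tower d w t' ++ [extLetter d (tower d w t')] from rfl]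
      rw [padSeq_append_left _ hb]
      exact ih ht'

variable (d) in
noncomputable def limSeq (w : List ℕ) : ℕ → ℕ := fun i => padSeq (tower d w (i + 1)) i

lemma limSeq_agree (w : List ℕ) {t i : ℕ} (hi : i < (tower d w t).length) :
    limSeq d w i = padSeq (tower d w t) i := by
  rcases le_or_gt (i + 1) t with h | h
  · rw [show limSeq d w i = padSeq (tower d w (i + 1)) i from rfl]
    exact (tower_agree w (t := i + 1) (t' := t) (i := i) h (by simp only [tower_length]; omega)).symm
  · rw [limSeq, ← tower_agree w (show t ≤ i + 1 by omega) hi]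

lemma limSeq_mem {w : List ℕ} (hd : IsAltLyndon d) (hw : good d w) :
    limSeq d w ∈ LyndonSystem d := by
  classical
  constructor
  · intro i
    exact good_le (tower_good hd hw (i + 1)) i
  · intro k
    by_cases h : ∀ m, limSeq d w (k + m) = d m
    · exact Or.inl (funext fun i => (h i).symm)
    · push_neg at h
      have hex : ∃ m, limSeq d w (k + m) ≠ d m := h
      set m0 := Nat.find hex with hm0
      have hspec : limSeq d w (k + m0) ≠ d m0 := Nat.find_spec hex
      have hmin : ∀ i < m0, limSeq d w (k + i) = d i :=
        fun i hi => not_not.mp (Nat.find_min hex hi)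
      have hlenW : (tower d w (k + m0 + 1)).length = w.length + (k + m0 + 1) :=
        tower_length w _
      have hpad : ∀ i, k + i < (tower d w (k + m0 + 1)).length →
          padSeq ((tower d w (k + m0 + 1)).drop k) i = limSeq d w (k + i) := by
        intro i hik
        rw [padSeq_drop]
        show padSeq (tower d w (k + m0 + 1)) (k + i) = _
        rw [← limSeq_agree w (t := k + m0 + 1) hik]
      have hdl : ((tower d w (k + m0 + 1)).drop k).length
          = (tower d w (k + m0 + 1)).length - k := by simp
      rcases tower_good hd hw (k + m0 + 1) k with hp | ⟨k', hk', hbef, hc⟩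
      · exact absurd (by
          have h2 := hp m0 (by omega)
          rwa [hpad m0 (by omega), Nat.zero_add] at h2) hspec
      · simp only [Nat.zero_add] at hbef hc
        have hk'm : k' = m0 := by
          rcases lt_trichotomy k' m0 with hlt | rfl | hgt
          · exfalso
            apply cnd_ne hc
            rw [hpad k' (by omega), hmin k' hlt]
          · rfl
          · exact absurd (by rw [← hpad m0 (by omega)]; exact hbef m0 hgt) hspec
        subst hk'm
        refine Or.inr ⟨m0, fun i hi => (hmin i hi).symm, ?_⟩
        show cnd m0 (d m0) (limSeq d w (k + m0))
        rwa [hpad m0 (by omega)] at hc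

lemma mem_lang_of_good {w : List ℕ} (hd : IsAltLyndon d) (hw : good d w) :
    w ∈ LyndonLang d := by
  refine ⟨limSeq d w, limSeq_mem hd hw, 0, ?_⟩
  apply List.ext_getElem (by simp)
  intro i h1 h2
  have : limSeq d w i = padSeq w i := limSeq_agree w (t := 0) (by simpa using h1)
  simp only [List.getElem_map, List.getElem_range]
  rw [Nat.zero_add, this]
  simp [padSeq, List.getD_eq_getElem?_getD, List.getElem?_eq_getElem h1]

lemma lang_eq_good (hd : IsAltLyndon d) :
    LyndonLang d = {w | good d w} :=
  Set.ext fun w => ⟨good_of_mem_lang, mem_lang_of_good hd⟩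

end LangEq
section CountInfra

variable {d : ℕ → ℕ}

variable (d) in
def GSet (n : ℕ) : Set (List ℕ) := {w | good d w ∧ w.length = n}

variable (d) in
noncomputable def Hn (n : ℕ) : ℕ := (GSet d n).ncard

lemma pad_take {x : List ℕ} {k i : ℕ} (h : i < k) : padSeq (x.take k) i = padSeq x i := by
  simp [padSeq, List.getD_eq_getElem?_getD, List.getElem?_take, h]

lemma pad_cons_zero {c : ℕ} {u : List ℕ} : padSeq (c :: u) 0 = c := rfl

lemma pad_cons_succ {c : ℕ} {u : List ℕ} (j : ℕ) : padSeq (c :: u) (j + 1) = padSeq u j := rfl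

lemma pad_emb_lt {p : List ℕ} {c : ℕ} {u : List ℕ} {i : ℕ} (h : i < p.length) :
    padSeq (p ++ c :: u) i = padSeq p i := padSeq_append_left _ h

lemma pad_emb_eq {p : List ℕ} {c : ℕ} {u : List ℕ} :
    padSeq (p ++ c :: u) p.length = c := by
  rw [padSeq_append_right _ le_rfl, Nat.sub_self]
  simp [padSeq]

lemma pad_emb_gt {p : List ℕ} {c : ℕ} {u : List ℕ} (j : ℕ) :
    padSeq (p ++ c :: u) (p.length + 1 + j) = padSeq u j := by
  rw [padSeq_append_right _ (by omega), show p.length + 1 + j - p.length = j + 1 by omega,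
    pad_cons_succ]

lemma drop_emb {p : List ℕ} {c : ℕ} {u : List ℕ} :
    (p ++ c :: u).drop (p.length + 1) = u := by
  simpa using List.drop_append (l₁ := p) (l₂ := c :: u) 1

lemma len_emb {p : List ℕ} {c : ℕ} {u : List ℕ} :
    (p ++ c :: u).length = p.length + 1 + u.length := by
  simp; omega

lemma recon {x : List ℕ} {k : ℕ} (h : k < x.length) :
    x = x.take k ++ padSeq x k :: x.drop (k + 1) := by
  have hl : (x.take k).length = k := by simp; omega
  apply list_eq_of_padSeq
  · rw [len_emb, hl]
    simp; omega
  · intro i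
    rcases lt_trichotomy i k with hik | rfl | hik
    · rw [pad_emb_lt (by omega), pad_take hik]
    · have := pad_emb_eq (p := x.take i) (c := padSeq x i) (u := x.drop (i+1))
      rw [hl] at this
      rw [this]
    · have h2 : i = k + 1 + (i - k - 1) := by omega
      calc padSeq x i = padSeq x (k + 1 + (i - k - 1)) := by rw [← h2]
        _ = padSeq (x.drop (k+1)) (i - k - 1) := by rw [padSeq_drop]; rfl
        _ = padSeq (x.take k ++ padSeq x k :: x.drop (k + 1)) i := by
              have h3 := pad_emb_gt (p := x.take k) (c := padSeq x k) (u := x.drop (k+1))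
                (i - k - 1)
              rw [hl] at h3
              rw [← h2] at h3
              exact h3.symm

lemma finite_GSet (d : ℕ → ℕ) (n : ℕ) : (GSet d n).Finite := by
  apply Set.Finite.subset (Set.finite_range
    (fun g : Fin n → Fin (d 0 + 1) => List.ofFn (fun i => (g i : ℕ))))
  rintro w ⟨hw, hlen⟩
  refine ⟨fun i => ⟨padSeq w i, by have := good_le hw i; omega⟩, ?_⟩
  apply List.ext_getElem (by simp [hlen])
  intro i h1 h2
  simp only [List.getElem_ofFn]
  show padSeq w _ = _
  simp [padSeq, List.getD_eq_getElem?_getD, List.getElem?_eq_getElem h2]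

lemma Hword_eq_Hn (hd : IsAltLyndon d) (n : ℕ) : Hword d n = Hn d n := by
  unfold Hword Hn GSet
  congr 1
  ext w
  have := Set.ext_iff.mp (lang_eq_good hd) w
  simp only [Set.mem_setOf_eq] at this ⊢
  rw [this]

/-- splitting the alternate order at position `t`, given agreement below `t` -/
lemma altLe_split {x y : ℕ → ℕ} {t : ℕ} (hag : ∀ i < t, x i = y i) :
    altLe x y ↔ (cnd t (x t) (y t) ∨ (x t = y t ∧
      (if Even (t + 1) then altLe (shiftSeq x (t + 1)) (shiftSeq y (t + 1))
       else altLe (shiftSeq y (t + 1)) (shiftSeq x (t + 1))))) := by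
  have hag' : x t = y t → ∀ i < t + 1, x i = y i := by
    intro ht i hi
    rcases lt_or_ge i t with h | h
    · exact hag i h
    · have : i = t := by omega
      rwa [this]
  constructor
  · rintro (heq | hlt)
    · refine Or.inr ⟨congrFun heq t, ?_⟩
      split <;> exact Or.inl (by rw [heq])
    · by_cases ht : x t = y t
      · refine Or.inr ⟨ht, ?_⟩
        have := (altLt_shift (hag' ht)).mp hlt
        split at this <;> [rw [if_pos ‹_›]; rw [if_neg ‹_›]] <;> exact Or.inr this
      · exact Or.inl (altLt_witness hlt ht hag)
  · rintro (hc | ⟨ht, hrest⟩)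
    · exact Or.inr ⟨t, hag, hc⟩
    · have heqcase : (shiftSeq x (t+1) = shiftSeq y (t+1)) → x = y := by
        intro hs
        funext i
        rcases lt_or_ge i (t + 1) with h | h
        · exact hag' ht i h
        · have := congrFun hs (i - (t+1))
          simpa [shiftSeq, Nat.add_sub_cancel' h] using this
      split at hrest
      · rcases hrest with hs | hlt
        · exact Or.inl (heqcase hs)
        · exact Or.inr ((altLt_shift (hag' ht)).mpr (by rw [if_pos ‹_›]; exact hlt))
      · rcases hrest with hs | hlt
        · exact Or.inl (heqcase hs.symm)
        · exact Or.inr ((altLt_shift (hag' ht)).mpr (by rw [if_neg ‹_›]; exact hlt))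

lemma ncard_prod' (s : Set ℕ) (t : Set (List ℕ)) (hs : s.Finite) (ht : t.Finite) :
    (s ×ˢ t).ncard = s.ncard * t.ncard := by
  rw [Set.ncard_eq_toFinset_card _ (hs.prod ht), ← Set.Finite.toFinset_prod hs ht,
    Finset.card_product, Set.ncard_eq_toFinset_card _ hs, Set.ncard_eq_toFinset_card _ ht]

end CountInfra
section Span

variable {d : ℕ → ℕ}

lemma span {n k ν : ℕ} {lo hi : List ℕ} (hlo : good d lo) (hhi : good d hi)
    (hlol : lo.length = n) (hhil : hi.length = n) (hn : n = k + 1 + ν)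
    (hpre : ∀ i < k, padSeq lo i = padSeq hi i)
    (hk : padSeq lo k < padSeq hi k)
    {c : ℕ} {u : List ℕ} (hu : good d u) (hul : u.length = ν)
    (hc1 : padSeq lo k ≤ c) (hc2 : c ≤ padSeq hi k)
    (hclo : c = padSeq lo k → altLe (padSeq (lo.drop (k+1))) (padSeq u))
    (hchi : c = padSeq hi k → altLe (padSeq u) (padSeq (hi.drop (k+1)))) :
    good d (lo.take k ++ c :: u) := by
  set p := lo.take k with hp
  have hplen : p.length = k := by rw [hp]; simp; omega
  have hklt : k < lo.length := by omega
  have hlo_dec : lo = p ++ padSeq lo k :: lo.drop (k+1) := recon hklt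
  have htake : hi.take k = p := by
    apply list_eq_of_padSeq
    · rw [hplen]; simp; omega
    · intro i
      rcases lt_or_ge i k with hik | hik
      · rw [pad_take hik, ← hpre i hik, hp, pad_take hik]
      · rw [padSeq_eq_zero (by simp; omega), padSeq_eq_zero (by omega)]
  have hhi_dec : hi = p ++ padSeq hi k :: hi.drop (k+1) := by
    have := recon (x := hi) (k := k) (by omega)
    rwa [htake] at this
  have hlodl : (lo.drop (k+1)).length = ν := by simp; omega
  have hhidl : (hi.drop (k+1)).length = ν := by simp; omega
  intro j
  rcases lt_or_ge k j with hj | hj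
  · -- suffix inside u
    obtain ⟨r, hr⟩ : ∃ r, j = k + 1 + r := ⟨j - k - 1, by omega⟩
    subst hr
    have e0 : (p ++ c :: u).drop (k + 1 + r) = u.drop r := by
      have h1 := List.drop_length_add_append (l₁ := p) (l₂ := c :: u) (1 + r)
      rw [hplen] at h1
      rw [show k + 1 + r = k + (1 + r) by omega, h1,
        show (1:ℕ) + r = r + 1 by omega, List.drop_succ_cons]
    rw [e0]
    exact hu _
  · -- spanning suffix
    have hdropj : (p ++ c :: u).drop j = (p.drop j) ++ c :: u :=
      List.drop_append_of_le_length (by omega)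
    set t := p.drop j with ht
    have htlen : t.length = k - j := by rw [ht]; simp; omega
    have e1 : lo.drop j = t ++ padSeq lo k :: lo.drop (k+1) := by
      conv_lhs => rw [hlo_dec]
      exact List.drop_append_of_le_length (by omega)
    have e2 : hi.drop j = t ++ padSeq hi k :: hi.drop (k+1) := by
      conv_lhs => rw [hhi_dec]
      exact List.drop_append_of_le_length (by omega)
    have hLO := hlo j
    rw [e1] at hLO
    rw [hdropj]
    rcases okOff_append.mp hLO with hwit | ⟨hpre_t, hcontlo⟩
    · exact okOff_append.mpr (Or.inl hwit)
    · have hHI := hhi j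
      rw [e2] at hHI
      rcases okOff_append.mp hHI with hwit2 | ⟨-, hconthi⟩
      · exact okOff_append.mpr (Or.inl hwit2)
      · refine okOff_append.mpr (Or.inr ⟨hpre_t, ?_⟩)
        rw [Nat.zero_add] at hcontlo hconthi ⊢
        set m := t.length with hm
        rw [okOff_cons] at hcontlo hconthi ⊢
        rcases Nat.even_or_odd m with hme | hmo
        · have hcnd_iff : ∀ a b : ℕ, cnd m a b ↔ b < a := fun a b => by
            simp [cnd, hme]
          have hlo_le : padSeq lo k ≤ d m := by
            rcases hcontlo with h | h
            · exact le_of_lt ((hcnd_iff _ _).mp h)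
            · omega
          have hhi_le : padSeq hi k ≤ d m := by
            rcases hconthi with h | h
            · exact le_of_lt ((hcnd_iff _ _).mp h)
            · omega
          by_cases hcd : c < d m
          · exact Or.inl ((hcnd_iff _ _).mpr hcd)
          · have hceq : c = d m := by omega
            have hhieq : padSeq hi k = d m := by omega
            have hoff : okOff d (m+1) (hi.drop (k+1)) := by
              rcases hconthi with h | h
              · exact absurd ((hcnd_iff _ _).mp h) (by omega)
              · exact h.2
            have hle_u := hchi (by omega)
            refine Or.inr ⟨hceq, ?_⟩
            rw [okOff_iff_le] at hoff ⊢
            have hodd : ¬ Even (m+1) := by simp [Nat.even_add_one, hme]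
            rw [if_neg hodd] at hoff ⊢
            rw [hhidl] at hoff
            rw [hul]
            exact altLe_trans hle_u hoff
        · have hcnd_iff : ∀ a b : ℕ, cnd m a b ↔ a < b := fun a b => by
            simp [cnd, Nat.not_even_iff_odd.mpr hmo]
          have hlo_ge : d m ≤ padSeq lo k := by
            rcases hcontlo with h | h
            · exact le_of_lt ((hcnd_iff _ _).mp h)
            · omega
          by_cases hcd : d m < c
          · exact Or.inl ((hcnd_iff _ _).mpr hcd)
          · have hceq : c = d m := by omega
            have hloeq : padSeq lo k = d m := by omega
            have hoff : okOff d (m+1) (lo.drop (k+1)) := by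
              rcases hcontlo with h | h
              · exact absurd ((hcnd_iff _ _).mp h) (by omega)
              · exact h.2
            have hle_u := hclo (by omega)
            refine Or.inr ⟨hceq, ?_⟩
            rw [okOff_iff_le] at hoff ⊢
            have hev : Even (m+1) := by simp [Nat.even_add_one, Nat.not_even_iff_odd.mpr hmo]
            rw [if_pos hev] at hoff ⊢
            rw [hlodl] at hoff
            rw [hul]
            exact altLe_trans hoff hle_u

end Span
section AuxCount

variable {d : ℕ → ℕ}

lemma aux_count (hd : IsAltLyndon d) {n k ν : ℕ} (hn : n = k + 1 + ν)
    (IH : ∀ a b : List ℕ, good d a → good d b → a.length = ν → b.length = ν →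
      altLe (padSeq a) (padSeq b) →
      (Set.ncard {x | good d x ∧ x.length = ν ∧ altLe (padSeq a) (padSeq x) ∧
          altLe (padSeq x) (padSeq b)} : ℤ)
        = (∑ j ∈ Finset.Icc 1 ν, (-1:ℤ)^j * ((padSeq b (j-1) : ℤ) - (padSeq a (j-1) : ℤ)) *
            (Hn d (ν - j) : ℤ)) + 1)
    {lo hi : List ℕ} (hlo : good d lo) (hhi : good d hi)
    (hlol : lo.length = n) (hhil : hi.length = n)
    (hpre : ∀ i < k, padSeq lo i = padSeq hi i)
    (hk : padSeq lo k < padSeq hi k) :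
    (Set.ncard {x | good d x ∧ x.length = n ∧ (∀ i < k, padSeq x i = padSeq lo i) ∧
        padSeq lo k ≤ padSeq x k ∧ padSeq x k ≤ padSeq hi k ∧
        (padSeq x k = padSeq lo k → altLe (padSeq (lo.drop (k+1))) (padSeq (x.drop (k+1)))) ∧
        (padSeq x k = padSeq hi k → altLe (padSeq (x.drop (k+1))) (padSeq (hi.drop (k+1))))} : ℤ)
      = ((padSeq hi k : ℤ) - (padSeq lo k : ℤ)) * (Hn d ν : ℤ)
        + (∑ j ∈ Finset.Icc 1 ν, (-1:ℤ)^j * ((padSeq (hi.drop (k+1)) (j-1) : ℤ)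
            - (padSeq (lo.drop (k+1)) (j-1) : ℤ)) * (Hn d (ν - j) : ℤ)) + 1 := by
  classical
  set p := lo.take k with hp
  have hplen : p.length = k := by rw [hp]; simp; omega
  set lo' := lo.drop (k+1) with hlo'
  set hi' := hi.drop (k+1) with hhi'
  set D := Dw d 0 ν with hD
  have hlo'len : lo'.length = ν := by rw [hlo']; simp; omega
  have hhi'len : hi'.length = ν := by rw [hhi']; simp; omega
  have hDlen : D.length = ν := by rw [hD]; simp
  have glo' : good d lo' := good_drop hlo _
  have ghi' : good d hi' := good_drop hhi _
  have gD : good d D := good_Dw hd 0 ν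
  have hDmin : ∀ u : List ℕ, good d u → u.length = ν → altLe (padSeq D) (padSeq u) := by
    intro u hu hul
    have := good_min hu
    rwa [hul] at this
  set X := {x | good d x ∧ x.length = n ∧ (∀ i < k, padSeq x i = padSeq lo i) ∧
        padSeq lo k ≤ padSeq x k ∧ padSeq x k ≤ padSeq hi k ∧
        (padSeq x k = padSeq lo k → altLe (padSeq lo') (padSeq (x.drop (k+1)))) ∧
        (padSeq x k = padSeq hi k → altLe (padSeq (x.drop (k+1))) (padSeq hi'))} with hX
  -- decomposition of members
  have hx_dec : ∀ x : List ℕ, x.length = n → (∀ i < k, padSeq x i = padSeq lo i) →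
      x = p ++ padSeq x k :: x.drop (k+1) := by
    intro x hxl hxpre
    have h1 : x = x.take k ++ padSeq x k :: x.drop (k+1) := recon (by omega)
    have h2 : x.take k = p := by
      apply list_eq_of_padSeq
      · rw [hplen]; simp; omega
      · intro i
        rcases lt_or_ge i k with hik | hik
        · rw [pad_take hik, hxpre i hik, hp, pad_take hik]
        · rw [padSeq_eq_zero (by simp; omega), padSeq_eq_zero (by rw [hplen]; omega)]
    rw [h2] at h1
    exact h1
  have hemb_len : ∀ (c : ℕ) (u : List ℕ), u.length = ν → (p ++ c :: u).length = n := by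
    intro c u hul
    rw [len_emb, hplen, hul]; omega
  have hemb_pre : ∀ (c : ℕ) (u : List ℕ), ∀ i < k, padSeq (p ++ c :: u) i = padSeq lo i := by
    intro c u i hik
    rw [pad_emb_lt (by omega), hp, pad_take hik]
  have hemb_k : ∀ (c : ℕ) (u : List ℕ), padSeq (p ++ c :: u) k = c := by
    intro c u
    have := pad_emb_eq (p := p) (c := c) (u := u)
    rwa [hplen] at this
  have hemb_drop : ∀ (c : ℕ) (u : List ℕ), (p ++ c :: u).drop (k+1) = u := by
    intro c u
    have := drop_emb (p := p) (c := c) (u := u)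
    rwa [hplen] at this
  -- the three slices
  set Xlo := {x ∈ X | padSeq x k = padSeq lo k} with hXlo
  set Xhi := {x ∈ X | padSeq x k = padSeq hi k} with hXhi
  set Xmid := {x ∈ X | padSeq lo k < padSeq x k ∧ padSeq x k < padSeq hi k} with hXmid
  have hXfin : X.Finite := (finite_GSet d n).subset (fun x hx => ⟨hx.1, hx.2.1⟩)
  have hXlofin : Xlo.Finite := hXfin.subset (fun x hx => hx.1)
  have hXhifin : Xhi.Finite := hXfin.subset (fun x hx => hx.1)
  have hXmidfin : Xmid.Finite := hXfin.subset (fun x hx => hx.1)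
  have hunion : X = Xlo ∪ (Xmid ∪ Xhi) := by
    ext x
    constructor
    · intro hx
      have h4 := hx.2.2.2.1
      have h5 := hx.2.2.2.2.1
      rcases eq_or_lt_of_le h4 with he | hlt
      · exact Or.inl ⟨hx, he.symm⟩
      · rcases eq_or_lt_of_le h5 with he2 | hlt2
        · exact Or.inr (Or.inr ⟨hx, he2⟩)
        · exact Or.inr (Or.inl ⟨hx, hlt, hlt2⟩)
    · rintro (h | h | h) <;> exact h.1
  have hdisj1 : Disjoint Xlo (Xmid ∪ Xhi) := by
    rw [Set.disjoint_left]
    rintro x ⟨-, hxk⟩ (⟨-, h1, -⟩ | ⟨-, h2⟩) <;> omega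
  have hdisj2 : Disjoint Xmid Xhi := by
    rw [Set.disjoint_left]
    rintro x ⟨-, -, h1⟩ ⟨-, h2⟩
    omega
  have hcardsplit : X.ncard = Xlo.ncard + (Xmid.ncard + Xhi.ncard) := by
    rw [hunion, Set.ncard_union_eq hdisj1 hXlofin (hXmidfin.union hXhifin),
      Set.ncard_union_eq hdisj2 hXmidfin hXhifin]
  -- counting Xhi
  set Shi := {u | good d u ∧ u.length = ν ∧ altLe (padSeq D) (padSeq u) ∧
      altLe (padSeq u) (padSeq hi')} with hShi
  have hXhi_eq : Xhi = (fun u => p ++ padSeq hi k :: u) '' Shi := by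
    ext x
    constructor
    · rintro ⟨⟨hxg, hxl, hxpre, h4, h5, h6, h7⟩, hxk⟩
      have hdl : (x.drop (k+1)).length = ν := by rw [List.length_drop, hxl]; omega
      refine ⟨x.drop (k+1), ⟨good_drop hxg _, hdl, ?_, h7 hxk⟩, ?_⟩
      · exact hDmin _ (good_drop hxg _) hdl
      · rw [← hxk]
        exact (hx_dec x hxl hxpre).symm
    · rintro ⟨u, hu, rfl⟩
      have hgood : good d (p ++ padSeq hi k :: u) := by
        rw [hp]
        exact span hlo hhi hlol hhil hn hpre hk hu.1 hu.2.1 (le_of_lt hk) le_rfl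
          (fun h => absurd h (by omega)) (fun _ => hu.2.2.2)
      refine ⟨⟨hgood, hemb_len _ _ hu.2.1, hemb_pre _ _, ?_, ?_, ?_, ?_⟩, hemb_k _ _⟩
      · rw [hemb_k]; omega
      · rw [hemb_k]
      · rw [hemb_k]; intro h; exact absurd h (by omega)
      · rw [hemb_k, hemb_drop]
        exact fun _ => hu.2.2.2
  have hXhi_card : Xhi.ncard = Shi.ncard := by
    rw [hXhi_eq]
    apply Set.ncard_image_of_injOn
    intro u _ u' _ h
    have := congrArg (List.drop (k+1)) h
    rwa [hemb_drop, hemb_drop] at this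
  have hShi_count : (Shi.ncard : ℤ)
      = (∑ j ∈ Finset.Icc 1 ν, (-1:ℤ)^j * ((padSeq hi' (j-1) : ℤ) - (padSeq D (j-1) : ℤ)) *
          (Hn d (ν - j) : ℤ)) + 1 := by
    have := IH D hi' gD ghi' hDlen hhi'len (hDmin hi' ghi' hhi'len)
    rw [← this]
  -- counting Xlo
  set Slo := {u | good d u ∧ u.length = ν ∧ altLe (padSeq lo') (padSeq u)} with hSlo
  have hXlo_eq : Xlo = (fun u => p ++ padSeq lo k :: u) '' Slo := by
    ext x
    constructor
    · rintro ⟨⟨hxg, hxl, hxpre, h4, h5, h6, h7⟩, hxk⟩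
      have hdl : (x.drop (k+1)).length = ν := by rw [List.length_drop, hxl]; omega
      refine ⟨x.drop (k+1), ⟨good_drop hxg _, hdl, h6 hxk⟩, ?_⟩
      rw [← hxk]
      exact (hx_dec x hxl hxpre).symm
    · rintro ⟨u, hu, rfl⟩
      have hgood : good d (p ++ padSeq lo k :: u) := by
        rw [hp]
        exact span hlo hhi hlol hhil hn hpre hk hu.1 hu.2.1 le_rfl (le_of_lt hk)
          (fun _ => hu.2.2) (fun h => absurd h (by omega))
      refine ⟨⟨hgood, hemb_len _ _ hu.2.1, hemb_pre _ _, ?_, ?_, ?_, ?_⟩, hemb_k _ _⟩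
      · rw [hemb_k]
      · rw [hemb_k]; omega
      · rw [hemb_k, hemb_drop]
        exact fun _ => hu.2.2
      · rw [hemb_k]; intro h; exact absurd h (by omega)
  have hXlo_card : Xlo.ncard = Slo.ncard := by
    rw [hXlo_eq]
    apply Set.ncard_image_of_injOn
    intro u _ u' _ h
    have := congrArg (List.drop (k+1)) h
    rwa [hemb_drop, hemb_drop] at this
  -- complement counting for Slo
  set B := {u | good d u ∧ u.length = ν ∧ altLt (padSeq u) (padSeq lo')} with hB
  set C := {u | good d u ∧ u.length = ν ∧ altLe (padSeq D) (padSeq u) ∧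
      altLe (padSeq u) (padSeq lo')} with hC
  have hBfin : B.Finite := (finite_GSet d ν).subset (fun u hu => ⟨hu.1, hu.2.1⟩)
  have hSlofin : Slo.Finite := (finite_GSet d ν).subset (fun u hu => ⟨hu.1, hu.2.1⟩)
  have hABunion : Slo ∪ B = GSet d ν := by
    ext u
    constructor
    · rintro (hu | hu) <;> exact ⟨hu.1, hu.2.1⟩
    · rintro ⟨hu, hul⟩
      rcases alt_total (padSeq lo') (padSeq u) with he | hlt | hlt
      · exact Or.inl ⟨hu, hul, Or.inl (funext he)⟩
      · exact Or.inl ⟨hu, hul, Or.inr hlt⟩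
      · exact Or.inr ⟨hu, hul, hlt⟩
  have hABdisj : Disjoint Slo B := by
    rw [Set.disjoint_left]
    rintro u ⟨-, -, hle⟩ ⟨-, -, hlt⟩
    rcases hle with he | h
    · rw [he] at hlt
      exact altLt_irrefl _ hlt
    · exact altLt_asymm h hlt
  have hAB : Slo.ncard + B.ncard = Hn d ν := by
    rw [← Set.ncard_union_eq hABdisj hSlofin hBfin, hABunion]
    rfl
  have hCB : C = insert lo' B := by
    ext u
    constructor
    · rintro ⟨hu, hul, -, hle⟩
      rcases hle with he | h
      · left
        exact list_eq_of_padSeq (by omega) (fun i => congrFun he i)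
      · right
        exact ⟨hu, hul, h⟩
    · rintro (rfl | hu)
      · exact ⟨glo', hlo'len, hDmin _ glo' hlo'len, Or.inl rfl⟩
      · exact ⟨hu.1, hu.2.1, hDmin _ hu.1 hu.2.1, Or.inr hu.2.2⟩
  have hC_card : C.ncard = B.ncard + 1 := by
    rw [hCB, Set.ncard_insert_of_notMem ?_ hBfin]
    rintro ⟨-, -, hlt⟩
    exact altLt_irrefl _ hlt
  have hC_count : (C.ncard : ℤ)
      = (∑ j ∈ Finset.Icc 1 ν, (-1:ℤ)^j * ((padSeq lo' (j-1) : ℤ) - (padSeq D (j-1) : ℤ)) *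
          (Hn d (ν - j) : ℤ)) + 1 := by
    have := IH D lo' gD glo' hDlen hlo'len (hDmin lo' glo' hlo'len)
    rw [← this]
  -- counting Xmid
  have hXmid_eq : Xmid = (fun q : ℕ × List ℕ => p ++ q.1 :: q.2) ''
      ((Set.Ioo (padSeq lo k) (padSeq hi k)) ×ˢ (GSet d ν)) := by
    ext x
    constructor
    · rintro ⟨⟨hxg, hxl, hxpre, h4, h5, h6, h7⟩, h1, h2⟩
      refine ⟨(padSeq x k, x.drop (k+1)), ⟨⟨h1, h2⟩, good_drop hxg _,
        by rw [List.length_drop, hxl]; omega⟩, ?_⟩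
      exact (hx_dec x hxl hxpre).symm
    · rintro ⟨⟨c, u⟩, ⟨⟨hc1, hc2⟩, hu, hul⟩, rfl⟩
      have hgood : good d (p ++ c :: u) := by
        rw [hp]
        exact span hlo hhi hlol hhil hn hpre hk hu hul (le_of_lt hc1) (le_of_lt hc2)
          (fun h => absurd h (by omega)) (fun h => absurd h (by omega))
      refine ⟨⟨hgood, hemb_len _ _ hul, hemb_pre _ _, ?_, ?_, ?_, ?_⟩, ?_, ?_⟩
      · rw [hemb_k]; omega
      · rw [hemb_k]; omega
      · rw [hemb_k]; intro h; exact absurd h (by omega)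
      · rw [hemb_k]; intro h; exact absurd h (by omega)
      · rw [hemb_k]; omega
      · rw [hemb_k]; omega
  have hXmid_card : Xmid.ncard = (padSeq hi k - padSeq lo k - 1) * Hn d ν := by
    rw [hXmid_eq]
    rw [Set.ncard_image_of_injOn ?_]
    · rw [ncard_prod' _ _ (Set.finite_Ioo _ _) (finite_GSet d ν),
        ← Finset.coe_Ioo, Set.ncard_coe_finset, Nat.card_Ioo]
      rfl
    · rintro ⟨c, u⟩ - ⟨c', u'⟩ - h
      have h1 := congrArg (fun w => padSeq w k) h
      simp only at h1
      rw [hemb_k, hemb_k] at h1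
      have h2 := congrArg (List.drop (k+1)) h
      simp only at h2
      rw [hemb_drop, hemb_drop] at h2
      exact Prod.ext h1 h2
  -- final algebra
  have hsum : (∑ j ∈ Finset.Icc 1 ν, (-1:ℤ)^j * ((padSeq hi' (j-1) : ℤ) - (padSeq D (j-1) : ℤ)) *
          (Hn d (ν - j) : ℤ))
      - (∑ j ∈ Finset.Icc 1 ν, (-1:ℤ)^j * ((padSeq lo' (j-1) : ℤ) - (padSeq D (j-1) : ℤ)) *
          (Hn d (ν - j) : ℤ))
      = ∑ j ∈ Finset.Icc 1 ν, (-1:ℤ)^j * ((padSeq hi' (j-1) : ℤ) - (padSeq lo' (j-1) : ℤ)) *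
          (Hn d (ν - j) : ℤ) := by
    rw [← Finset.sum_sub_distrib]
    apply Finset.sum_congr rfl
    intro j _
    ring
  have hmidcast : ((Xmid.ncard : ℤ)) = ((padSeq hi k : ℤ) - (padSeq lo k : ℤ) - 1) * (Hn d ν : ℤ) := by
    rw [hXmid_card]
    push_cast [Nat.sub_sub]
    rw [Nat.cast_sub (by omega)]
    push_cast
    ring
  have hcast1 : ((X.ncard : ℤ)) = (Xlo.ncard : ℤ) + (Xmid.ncard : ℤ) + (Xhi.ncard : ℤ) := by
    rw [hcardsplit]; push_cast; ring
  have hlocast : (Xlo.ncard : ℤ) = (Hn d ν : ℤ) + 1 - (C.ncard : ℤ) := by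
    have h1 : (Slo.ncard : ℤ) + (B.ncard : ℤ) = (Hn d ν : ℤ) := by exact_mod_cast hAB
    have h2 : (C.ncard : ℤ) = (B.ncard : ℤ) + 1 := by exact_mod_cast hC_card
    rw [hXlo_card]
    omega
  rw [hcast1, hlocast, hC_count, hmidcast, hXhi_card, hShi_count]
  rw [show ((padSeq hi k : ℤ) - (padSeq lo k : ℤ)) * (Hn d ν : ℤ)
      + (∑ j ∈ Finset.Icc 1 ν, (-1:ℤ)^j * ((padSeq hi' (j-1) : ℤ)
          - (padSeq lo' (j-1) : ℤ)) * (Hn d (ν - j) : ℤ)) + 1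
    = ((padSeq hi k : ℤ) - (padSeq lo k : ℤ)) * (Hn d ν : ℤ)
      + ((∑ j ∈ Finset.Icc 1 ν, (-1:ℤ)^j * ((padSeq hi' (j-1) : ℤ) - (padSeq D (j-1) : ℤ)) *
          (Hn d (ν - j) : ℤ))
      - (∑ j ∈ Finset.Icc 1 ν, (-1:ℤ)^j * ((padSeq lo' (j-1) : ℤ) - (padSeq D (j-1) : ℤ)) *
          (Hn d (ν - j) : ℤ))) + 1 by rw [hsum]]
  ring

end AuxCount
section MainCount

variable {d : ℕ → ℕ}

lemma sandwich_prefix {y x z : ℕ → ℕ} {k : ℕ} (hbef : ∀ i < k, y i = z i)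
    (h1 : altLe y x) (h2 : altLe x z) : ∀ i < k, x i = y i := by
  classical
  by_contra hc
  push_neg at hc
  obtain ⟨i0, hi0k, hi0⟩ := hc
  have hex : ∃ i, x i ≠ y i := ⟨i0, hi0⟩
  set j := Nat.find hex with hj
  have hjne : x j ≠ y j := Nat.find_spec hex
  have hjbef : ∀ i < j, x i = y i := fun i hi => not_not.mp (Nat.find_min hex hi)
  have hjk : j < k := lt_of_le_of_lt (Nat.find_min' hex hi0) hi0k
  rcases h1 with heq | hlt
  · exact hjne (congrFun heq j).symm
  · have hc1 : cnd j (y j) (x j) :=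
      altLt_witness hlt (fun e => hjne e.symm) (fun i hi => (hjbef i hi).symm)
    rcases h2 with heq2 | hlt2
    · exact hjne (by rw [congrFun heq2 j, ← hbef j hjk])
    · have hc2 : cnd j (x j) (z j) := altLt_witness hlt2
        (by rw [← hbef j hjk]; exact hjne)
        (fun i hi => by rw [hjbef i hi, hbef i (by omega)])
      rw [← hbef j hjk] at hc2
      exact cnd_asymm hc1 hc2

lemma main_count (hd : IsAltLyndon d) : ∀ n (a b : List ℕ), good d a → good d b →
    a.length = n → b.length = n → altLe (padSeq a) (padSeq b) →
    (Set.ncard {x | good d x ∧ x.length = n ∧ altLe (padSeq a) (padSeq x) ∧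
        altLe (padSeq x) (padSeq b)} : ℤ)
      = (∑ i ∈ Finset.Icc 1 n, (-1:ℤ)^i * ((padSeq b (i-1) : ℤ) - (padSeq a (i-1) : ℤ)) *
          (Hn d (n-i) : ℤ)) + 1 := by
  intro n
  induction n using Nat.strong_induction_on with
  | _ n IHn =>
  intro a b hga hgb hal hbl hab
  by_cases heq : padSeq a = padSeq b
  · -- degenerate case a = b
    have hset : {x | good d x ∧ x.length = n ∧ altLe (padSeq a) (padSeq x) ∧
        altLe (padSeq x) (padSeq b)} = {a} := by
      ext x
      constructor
      · rintro ⟨hgx, hxl, h1, h2⟩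
        rw [← heq] at h2
        have : padSeq a = padSeq x := altLe_antisymm h1 h2
        exact (list_eq_of_padSeq (by omega) (congrFun this)).symm
      · rintro rfl
        exact ⟨hga, hal, Or.inl rfl, Or.inl heq⟩
    rw [hset, Set.ncard_singleton, Finset.sum_eq_zero (fun i _ => by rw [← heq]; ring)]
    norm_num
  · have hlt : altLt (padSeq a) (padSeq b) := by
      rcases hab with h | h
      · exact absurd h heq
      · exact h
    have hne : ∃ i, padSeq a i ≠ padSeq b i := by
      by_contra hc
      push_neg at hc
      exact heq (funext hc)
    set k := Nat.find hne with hkdef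
    have hkne : padSeq a k ≠ padSeq b k := Nat.find_spec hne
    have hkbef : ∀ i < k, padSeq a i = padSeq b i :=
      fun i hi => not_not.mp (Nat.find_min hne hi)
    have hkn : k < n := by
      by_contra hc
      push_neg at hc
      exact hkne (by rw [padSeq_eq_zero (by omega), padSeq_eq_zero (by omega)])
    have hcnd : cnd k (padSeq a k) (padSeq b k) := altLt_witness hlt hkne hkbef
    set ν := n - k - 1 with hν
    have hn' : n = k + 1 + ν := by omega
    have hodd1 : ∀ x y : List ℕ, padSeq (x.drop (k+1)) = shiftSeq (padSeq x) (k+1) :=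
      fun x y => padSeq_drop x (k+1)
    rcases Nat.even_or_odd k with he | ho
    · -- Even k : b is lo, a is hi
      have hnotE : ¬ Even (k+1) := by simp [Nat.even_add_one, he]
      have hba : padSeq b k < padSeq a k := by simpa [cnd, he] using hcnd
      have haux := aux_count hd hn' (fun a b => IHn ν (by omega) a b) hgb hga hbl hal
        (fun i hi => (hkbef i hi).symm) hba
      have hseteq : {x | good d x ∧ x.length = n ∧ altLe (padSeq a) (padSeq x) ∧
          altLe (padSeq x) (padSeq b)}
          = {x | good d x ∧ x.length = n ∧ (∀ i < k, padSeq x i = padSeq b i) ∧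
            padSeq b k ≤ padSeq x k ∧ padSeq x k ≤ padSeq a k ∧
            (padSeq x k = padSeq b k → altLe (padSeq (b.drop (k+1))) (padSeq (x.drop (k+1)))) ∧
            (padSeq x k = padSeq a k → altLe (padSeq (x.drop (k+1))) (padSeq (a.drop (k+1))))} := by
        ext x
        simp only [Set.mem_setOf_eq]
        constructor
        · rintro ⟨hgx, hxl, h1, h2⟩
          have hxpre : ∀ i < k, padSeq x i = padSeq a i := sandwich_prefix hkbef h1 h2
          have hxpreb : ∀ i < k, padSeq x i = padSeq b i :=
            fun i hi => by rw [hxpre i hi, hkbef i hi]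
          have hs1 := (altLe_split (fun i hi => (hxpre i hi).symm)).mp h1
          have hs2 := (altLe_split hxpreb).mp h2
          rw [if_neg hnotE] at hs1 hs2
          simp only [cnd, he, if_pos] at hs1 hs2
          refine ⟨hgx, hxl, hxpreb, ?_, ?_, ?_, ?_⟩
          · rcases hs2 with h | ⟨h, -⟩ <;> omega
          · rcases hs1 with h | ⟨h, -⟩ <;> omega
          · intro hxk
            rcases hs2 with h | ⟨-, h⟩
            · omega
            · rw [padSeq_drop, padSeq_drop]; exact h
          · intro hxk
            rcases hs1 with h | ⟨-, h⟩
            · omega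
            · rw [padSeq_drop, padSeq_drop]; exact h
        · rintro ⟨hgx, hxl, hxpreb, hb1, hb2, hcl, hch⟩
          have hxpre : ∀ i < k, padSeq x i = padSeq a i :=
            fun i hi => by rw [hxpreb i hi, ← hkbef i hi]
          refine ⟨hgx, hxl, ?_, ?_⟩
          · apply (altLe_split (fun i hi => (hxpre i hi).symm)).mpr
            rw [if_neg hnotE]
            rcases eq_or_lt_of_le hb2 with hxk | hxk
            · refine Or.inr ⟨hxk.symm, ?_⟩
              rw [← padSeq_drop, ← padSeq_drop]
              exact hch hxk
            · exact Or.inl (by simp [cnd, he]; omega)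
          · apply (altLe_split hxpreb).mpr
            rw [if_neg hnotE]
            rcases eq_or_lt_of_le hb1 with hxk | hxk
            · refine Or.inr ⟨hxk.symm, ?_⟩
              rw [← padSeq_drop, ← padSeq_drop]
              exact hcl hxk.symm
            · exact Or.inl (by simp [cnd, he]; omega)
      rw [hseteq, haux]
      -- sum algebra
      have hzero : ∀ i ∈ Finset.Icc 1 n, i ∉ Finset.Icc (k+1) n →
          (-1:ℤ)^i * ((padSeq b (i-1) : ℤ) - (padSeq a (i-1) : ℤ)) * (Hn d (n-i) : ℤ) = 0 := by
        intro i hi hni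
        simp only [Finset.mem_Icc] at hi hni
        rw [hkbef (i-1) (by omega)]
        ring
      rw [← Finset.sum_subset (Finset.Icc_subset_Icc_left (by omega)) hzero]
      have hins : Finset.Icc (k+1) n = insert (k+1) (Finset.Icc (k+2) n) := by
        ext t
        simp only [Finset.mem_Icc, Finset.mem_insert]
        omega
      rw [hins, Finset.sum_insert (by simp)]
      have hmap : Finset.Icc (k+2) n = (Finset.Icc 1 ν).map (addLeftEmbedding (k+1)) := by
        rw [Finset.map_add_left_Icc]
        congr 1 <;> omega
      rw [hmap, Finset.sum_map]
      have hterm : ∀ j ∈ Finset.Icc 1 ν,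
          (-1:ℤ)^(addLeftEmbedding (k+1) j) *
            ((padSeq b (addLeftEmbedding (k+1) j - 1) : ℤ)
              - (padSeq a (addLeftEmbedding (k+1) j - 1) : ℤ)) *
            (Hn d (n - (addLeftEmbedding (k+1) j)) : ℤ)
          = (-1:ℤ)^j * ((padSeq (a.drop (k+1)) (j-1) : ℤ)
              - (padSeq (b.drop (k+1)) (j-1) : ℤ)) * (Hn d (ν - j) : ℤ) := by
        intro j hj
        simp only [Finset.mem_Icc] at hj
        have hjapp : (addLeftEmbedding (k+1) j : ℕ) = k + 1 + j := rfl
        rw [hjapp]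
        have hpa : padSeq a (k + 1 + j - 1) = padSeq (a.drop (k+1)) (j-1) := by
          rw [padSeq_drop]
          show _ = padSeq a ((k+1) + (j-1))
          congr 1
          omega
        have hpb : padSeq b (k + 1 + j - 1) = padSeq (b.drop (k+1)) (j-1) := by
          rw [padSeq_drop]
          show _ = padSeq b ((k+1) + (j-1))
          congr 1
          omega
        have hsign : (-1:ℤ)^(k+1+j) = -(-1:ℤ)^j := by
          rw [pow_add, pow_add, he.neg_one_pow]
          ring
        have hH : n - (k+1+j) = ν - j := by omega
        rw [hpa, hpb, hsign, hH]
        ring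
      rw [Finset.sum_congr rfl hterm]
      have hk1 : (-1:ℤ)^(k+1) * ((padSeq b (k+1-1) : ℤ) - (padSeq a (k+1-1) : ℤ)) *
          (Hn d (n-(k+1)) : ℤ)
          = ((padSeq a k : ℤ) - (padSeq b k : ℤ)) * (Hn d ν : ℤ) := by
        rw [show k+1-1 = k by omega, show n-(k+1) = ν by omega, pow_add, he.neg_one_pow]
        ring
      rw [hk1]
    · -- Odd k : a is lo, b is hi
      have hE1 : Even (k+1) := by simp [Nat.even_add_one, Nat.not_even_iff_odd.mpr ho]
      have hnotE : ¬ Even k := Nat.not_even_iff_odd.mpr ho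
      have hba : padSeq a k < padSeq b k := by simpa [cnd, hnotE] using hcnd
      have haux := aux_count hd hn' (fun a b => IHn ν (by omega) a b) hga hgb hal hbl
        hkbef hba
      have hseteq : {x | good d x ∧ x.length = n ∧ altLe (padSeq a) (padSeq x) ∧
          altLe (padSeq x) (padSeq b)}
          = {x | good d x ∧ x.length = n ∧ (∀ i < k, padSeq x i = padSeq a i) ∧
            padSeq a k ≤ padSeq x k ∧ padSeq x k ≤ padSeq b k ∧
            (padSeq x k = padSeq a k → altLe (padSeq (a.drop (k+1))) (padSeq (x.drop (k+1)))) ∧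
            (padSeq x k = padSeq b k → altLe (padSeq (x.drop (k+1))) (padSeq (b.drop (k+1))))} := by
        ext x
        simp only [Set.mem_setOf_eq]
        constructor
        · rintro ⟨hgx, hxl, h1, h2⟩
          have hxpre : ∀ i < k, padSeq x i = padSeq a i := sandwich_prefix hkbef h1 h2
          have hxpreb : ∀ i < k, padSeq x i = padSeq b i :=
            fun i hi => by rw [hxpre i hi, hkbef i hi]
          have hs1 := (altLe_split (fun i hi => (hxpre i hi).symm)).mp h1
          have hs2 := (altLe_split hxpreb).mp h2
          rw [if_pos hE1] at hs1 hs2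
          simp only [cnd, hnotE, if_neg, if_false] at hs1 hs2
          refine ⟨hgx, hxl, hxpre, ?_, ?_, ?_, ?_⟩
          · rcases hs1 with h | ⟨h, -⟩ <;> omega
          · rcases hs2 with h | ⟨h, -⟩ <;> omega
          · intro hxk
            rcases hs1 with h | ⟨-, h⟩
            · omega
            · rw [padSeq_drop, padSeq_drop]; exact h
          · intro hxk
            rcases hs2 with h | ⟨-, h⟩
            · omega
            · rw [padSeq_drop, padSeq_drop]; exact h
        · rintro ⟨hgx, hxl, hxpre, hb1, hb2, hcl, hch⟩
          have hxpreb : ∀ i < k, padSeq x i = padSeq b i :=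
            fun i hi => by rw [hxpre i hi, hkbef i hi]
          refine ⟨hgx, hxl, ?_, ?_⟩
          · apply (altLe_split (fun i hi => (hxpre i hi).symm)).mpr
            rw [if_pos hE1]
            rcases eq_or_lt_of_le hb1 with hxk | hxk
            · refine Or.inr ⟨hxk, ?_⟩
              rw [← padSeq_drop, ← padSeq_drop]
              exact hcl hxk.symm
            · exact Or.inl (by simp [cnd, hnotE]; omega)
          · apply (altLe_split hxpreb).mpr
            rw [if_pos hE1]
            rcases eq_or_lt_of_le hb2 with hxk | hxk
            · refine Or.inr ⟨hxk, ?_⟩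
              rw [← padSeq_drop, ← padSeq_drop]
              exact hch hxk
            · exact Or.inl (by simp [cnd, hnotE]; omega)
      rw [hseteq, haux]
      have hzero : ∀ i ∈ Finset.Icc 1 n, i ∉ Finset.Icc (k+1) n →
          (-1:ℤ)^i * ((padSeq b (i-1) : ℤ) - (padSeq a (i-1) : ℤ)) * (Hn d (n-i) : ℤ) = 0 := by
        intro i hi hni
        simp only [Finset.mem_Icc] at hi hni
        rw [hkbef (i-1) (by omega)]
        ring
      rw [← Finset.sum_subset (Finset.Icc_subset_Icc_left (by omega)) hzero]
      have hins : Finset.Icc (k+1) n = insert (k+1) (Finset.Icc (k+2) n) := by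
        ext t
        simp only [Finset.mem_Icc, Finset.mem_insert]
        omega
      rw [hins, Finset.sum_insert (by simp)]
      have hmap : Finset.Icc (k+2) n = (Finset.Icc 1 ν).map (addLeftEmbedding (k+1)) := by
        rw [Finset.map_add_left_Icc]
        congr 1 <;> omega
      rw [hmap, Finset.sum_map]
      have hterm : ∀ j ∈ Finset.Icc 1 ν,
          (-1:ℤ)^(addLeftEmbedding (k+1) j) *
            ((padSeq b (addLeftEmbedding (k+1) j - 1) : ℤ)
              - (padSeq a (addLeftEmbedding (k+1) j - 1) : ℤ)) *
            (Hn d (n - (addLeftEmbedding (k+1) j)) : ℤ)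
          = (-1:ℤ)^j * ((padSeq (b.drop (k+1)) (j-1) : ℤ)
              - (padSeq (a.drop (k+1)) (j-1) : ℤ)) * (Hn d (ν - j) : ℤ) := by
        intro j hj
        simp only [Finset.mem_Icc] at hj
        have hjapp : (addLeftEmbedding (k+1) j : ℕ) = k + 1 + j := rfl
        rw [hjapp]
        have hpa : padSeq a (k + 1 + j - 1) = padSeq (a.drop (k+1)) (j-1) := by
          rw [padSeq_drop]
          show _ = padSeq a ((k+1) + (j-1))
          congr 1
          omega
        have hpb : padSeq b (k + 1 + j - 1) = padSeq (b.drop (k+1)) (j-1) := by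
          rw [padSeq_drop]
          show _ = padSeq b ((k+1) + (j-1))
          congr 1
          omega
        have hsign : (-1:ℤ)^(k+1+j) = (-1:ℤ)^j := by
          rw [pow_add, pow_add, ho.neg_one_pow]
          ring
        have hH : n - (k+1+j) = ν - j := by omega
        rw [hpa, hpb, hsign, hH]
      rw [Finset.sum_congr rfl hterm]
      have hk1 : (-1:ℤ)^(k+1) * ((padSeq b (k+1-1) : ℤ) - (padSeq a (k+1-1) : ℤ)) *
          (Hn d (n-(k+1)) : ℤ)
          = ((padSeq b k : ℤ) - (padSeq a k : ℤ)) * (Hn d ν : ℤ) := by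
        rw [show k+1-1 = k by omega, show n-(k+1) = ν by omega, pow_add, ho.neg_one_pow]
        ring
      rw [hk1]

end MainCount

/-- Lemma 1: counting the words of `L_M` of length `n` between `A(n)` and `B(n)`. -/
theorem stmt1 (d : ℕ → ℕ) (hd : IsAltLyndon d) (n : ℕ) (a b : List ℕ)
    (ha : a ∈ LyndonLang d) (hb : b ∈ LyndonLang d)
    (han : a.length = n) (hbn : b.length = n) (hab : altLtList a b) :
    (Set.ncard {x : List ℕ |
        x ∈ LyndonLang d ∧ x.length = n ∧ altLeList a x ∧ altLeList x b} : ℤ) =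
      (∑ i ∈ Finset.Icc 1 n,
        (-1 : ℤ) ^ i * ((b.getD (i - 1) 0 : ℤ) - (a.getD (i - 1) 0 : ℤ)) *
          (Hword d (n - i) : ℤ)) + 1 := by
  have hga : good d a := good_of_mem_lang ha
  have hgb : good d b := good_of_mem_lang hb
  have hset : {x : List ℕ | x ∈ LyndonLang d ∧ x.length = n ∧ altLeList a x ∧ altLeList x b}
      = {x | good d x ∧ x.length = n ∧ altLe (padSeq a) (padSeq x) ∧
          altLe (padSeq x) (padSeq b)} := by
    ext x
    have hx := Set.ext_iff.mp (lang_eq_good hd) x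
    simp only [Set.mem_setOf_eq] at hx ⊢
    rw [hx]
    rfl
  rw [hset, main_count hd n a b hga hgb han hbn (Or.inr hab)]
  apply congrArg (· + 1)
  apply Finset.sum_congr rfl
  intro i _
  rw [Hword_eq_Hn hd]
  rfl
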